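/- arXiv:2012.03676 — 2 statements merged into one kernel-verified Lean document; each statement's English description precedes it below -/
import Mathlib

section
/- For any symmetric positive definite matrix Y in R^{n×n}, scalars h₁ ≤ τ ≤ h₂, and any continuously differentiable z : R → R^n, the inequality -(h₂ - h₁) ∫_{t-h₂}^{t-h₁} ż(s)^T Y ż(s) ds ≤ η^T M η holds, where η = [z(t-h₁); z(t-τ); z(t-h₂)] and M = [[-Y, Y, 0],[Y, -2Y, Y],[0, Y, -Y]]. -/
open scoped Kronecker
open Matrix intervalIntegral

/-- Scalar Cauchy–Schwarz for interval integrals. -/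
lemma cs_aux {ψ : ℝ → ℝ} (hψ : Continuous ψ) {p q : ℝ} (hpq : p ≤ q) :
    (∫ s in p..q, ψ s) ^ 2 ≤ (q - p) * ∫ s in p..q, (ψ s) ^ 2 := by
  have hint : IntervalIntegrable ψ MeasureTheory.volume p q := hψ.intervalIntegrable p q
  have hint2 : IntervalIntegrable (fun s => (ψ s) ^ 2) MeasureTheory.volume p q :=
    (hψ.pow 2).intervalIntegrable p q
  set I := ∫ s in p..q, ψ s with hI
  set J := ∫ s in p..q, (ψ s) ^ 2 with hJ
  have inner : ∀ c : ℝ, (∫ u in p..q, (c - ψ u) ^ 2) = (q - p) * c ^ 2 + ((-2 * c) * I + J) := by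
    intro c
    have heq : (fun u => (c - ψ u) ^ 2)
        = fun u => c ^ 2 + ((-2 * c) * ψ u + (ψ u) ^ 2) := by
      funext u; ring
    rw [heq, intervalIntegral.integral_add intervalIntegrable_const
        ((hint.const_mul _).add hint2),
      intervalIntegral.integral_add (hint.const_mul _) hint2,
      intervalIntegral.integral_const, intervalIntegral.integral_const_mul]
    simp only [smul_eq_mul]
    rfl
  have key : 0 ≤ ∫ s in p..q, (∫ u in p..q, (ψ s - ψ u) ^ 2) :=
    intervalIntegral.integral_nonneg hpq fun s _ =>
      intervalIntegral.integral_nonneg hpq fun u _ => sq_nonneg _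
  have houter : (∫ s in p..q, (∫ u in p..q, (ψ s - ψ u) ^ 2))
      = (q - p) * J + ((-2 * I) * I + (q - p) * J) := by
    have heq : (fun s => ∫ u in p..q, (ψ s - ψ u) ^ 2)
        = fun s => (q - p) * (ψ s) ^ 2 + ((-2 * (ψ s)) * I + J) := by
      funext s; rw [inner (ψ s)]
    have heq2 : (fun s => (q - p) * (ψ s) ^ 2 + ((-2 * (ψ s)) * I + J))
        = fun s => (q - p) * (ψ s) ^ 2 + ((-2 * I) * ψ s + J) := by
      funext s; ring
    rw [heq, heq2, intervalIntegral.integral_add (hint2.const_mul _)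
        ((hint.const_mul _).add intervalIntegrable_const),
      intervalIntegral.integral_add (hint.const_mul _) intervalIntegrable_const,
      intervalIntegral.integral_const, intervalIntegral.integral_const_mul,
      intervalIntegral.integral_const_mul]
    simp [smul_eq_mul]
    rfl
  rw [houter] at key
  nlinarith [key]

/-- Vector Jensen inequality for the quadratic form of a positive semidefinite matrix. -/
lemma jensen_vec {n : ℕ} (Y B : Matrix (Fin n) (Fin n) ℝ) (hB : Y = Bᴴ * B)
    {z : ℝ → Fin n → ℝ} (hz : ContDiff ℝ 1 z) {p q : ℝ} (hpq : p ≤ q) :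
    (z q - z p) ⬝ᵥ Y *ᵥ (z q - z p) ≤ (q - p) * ∫ s in p..q, deriv z s ⬝ᵥ Y *ᵥ deriv z s := by
  have hBt : Bᴴ = Bᵀ := Matrix.conjTranspose_eq_transpose_of_trivial B
  rw [hBt] at hB
  have hquad : ∀ x y : Fin n → ℝ, x ⬝ᵥ Y *ᵥ y = (B *ᵥ x) ⬝ᵥ (B *ᵥ y) := by
    intro x y
    rw [hB, ← Matrix.mulVec_mulVec, Matrix.dotProduct_mulVec, Matrix.vecMul_transpose]
  have hf : Continuous (deriv z) := hz.continuous_deriv le_rfl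
  have hgc : ∀ i, Continuous fun s => (B *ᵥ deriv z s) i := by
    intro i
    simp only [Matrix.mulVec, dotProduct]
    exact continuous_finset_sum _ fun j _ =>
      continuous_const.mul ((continuous_apply j).comp hf)
  have hfi : (∫ s in p..q, deriv z s) = z q - z p :=
    intervalIntegral.integral_deriv_eq_sub
      (fun x _ => (hz.differentiable one_ne_zero).differentiableAt)
      (hf.intervalIntegrable p q)
  have hcomp : ∀ j, (∫ s in p..q, deriv z s j) = (z q - z p) j := by
    intro j
    have h := (ContinuousLinearMap.proj (R := ℝ) (φ := fun _ : Fin n => ℝ)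
      j).intervalIntegral_comp_comm (hf.intervalIntegrable (μ := MeasureTheory.volume) p q)
    simpa [hfi] using h
  have hIg : ∀ i, (∫ s in p..q, (B *ᵥ deriv z s) i) = (B *ᵥ (z q - z p)) i := by
    intro i
    simp only [Matrix.mulVec, dotProduct]
    have hint : ∀ j : Fin n,
        IntervalIntegrable (fun s => B i j * deriv z s j) MeasureTheory.volume p q := fun j => by
      exact ((continuous_const.mul ((continuous_apply j).comp hf))).intervalIntegrable p q
    rw [intervalIntegral.integral_finset_sum (fun j _ => hint j)]
    exact Finset.sum_congr rfl fun j _ => by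
      rw [intervalIntegral.integral_const_mul, hcomp j]
  have h1 : (z q - z p) ⬝ᵥ Y *ᵥ (z q - z p)
      = ∑ i, (∫ s in p..q, (B *ᵥ deriv z s) i) ^ 2 := by
    rw [hquad]
    simp only [dotProduct]
    exact Finset.sum_congr rfl fun i _ => by rw [hIg i]; ring
  have h3 : (∫ s in p..q, deriv z s ⬝ᵥ Y *ᵥ deriv z s)
      = ∑ i, ∫ s in p..q, ((B *ᵥ deriv z s) i) ^ 2 := by
    rw [← intervalIntegral.integral_finset_sum (f := fun i s => ((B *ᵥ deriv z s) i) ^ 2)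
      (fun i _ => ((hgc i).pow 2).intervalIntegrable p q)]
    congr 1
    funext s
    rw [hquad]
    simp [dotProduct, sq]
  rw [h1, h3, Finset.mul_sum]
  exact Finset.sum_le_sum fun i _ => cs_aux (hgc i) hpq

/-- Algebraic identity for the Kronecker quadratic form. -/
lemma rhs_eq {n : ℕ} (Y : Matrix (Fin n) (Fin n) ℝ) (hYsymm : Y.IsSymm)
    (x₁ x₂ x₃ : Fin n → ℝ) :
    (fun p : Fin 3 × Fin n => ![x₁, x₂, x₃] p.1 p.2) ⬝ᵥ
        ((!![(-1 : ℝ), 1, 0; 1, -2, 1; 0, 1, -1] ⊗ₖ Y) *ᵥ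
          fun p : Fin 3 × Fin n => ![x₁, x₂, x₃] p.1 p.2)
      = -((x₁ - x₂) ⬝ᵥ Y *ᵥ (x₁ - x₂)) - ((x₂ - x₃) ⬝ᵥ Y *ᵥ (x₂ - x₃)) := by
  have hsym : ∀ x y : Fin n → ℝ, x ⬝ᵥ Y *ᵥ y = y ⬝ᵥ Y *ᵥ x := by
    intro x y
    rw [Matrix.dotProduct_mulVec, ← hYsymm, Matrix.vecMul_transpose, dotProduct_comm,
      hYsymm]
  set K : Matrix (Fin 3) (Fin 3) ℝ := !![(-1 : ℝ), 1, 0; 1, -2, 1; 0, 1, -1] with hK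
  set v : Fin 3 → Fin n → ℝ := ![x₁, x₂, x₃] with hv
  have hmv : ∀ (i : Fin 3) (j : Fin n),
      ((K ⊗ₖ Y) *ᵥ fun p : Fin 3 × Fin n => v p.1 p.2) (i, j)
        = ∑ k : Fin 3, K i k * (Y *ᵥ v k) j := by
    intro i j
    simp only [Matrix.mulVec, dotProduct, Fintype.sum_prod_type,
      Matrix.kroneckerMap_apply, Finset.mul_sum]
    exact Finset.sum_congr rfl fun k _ => Finset.sum_congr rfl fun l _ => by ring
  have hL : ((fun p : Fin 3 × Fin n => v p.1 p.2) ⬝ᵥ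
        ((K ⊗ₖ Y) *ᵥ fun p : Fin 3 × Fin n => v p.1 p.2))
      = ∑ i : Fin 3, ∑ k : Fin 3, K i k * (v i ⬝ᵥ Y *ᵥ v k) := by
    simp only [dotProduct, Fintype.sum_prod_type]
    refine Finset.sum_congr rfl fun i _ => ?_
    calc (∑ j, v i j * ((K ⊗ₖ Y) *ᵥ fun p : Fin 3 × Fin n => v p.1 p.2) (i, j))
        = ∑ j, ∑ k, v i j * (K i k * (Y *ᵥ v k) j) := by
          simp only [hmv, Finset.mul_sum]
      _ = ∑ k, ∑ j, K i k * (v i j * (Y *ᵥ v k) j) := by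
          rw [Finset.sum_comm]
          exact Finset.sum_congr rfl fun k _ => Finset.sum_congr rfl fun j _ => by ring
      _ = ∑ k, K i k * (v i ⬝ᵥ Y *ᵥ v k) := by
          simp only [dotProduct, Finset.mul_sum]
  rw [hL]
  simp only [hv, hK, Fin.sum_univ_three, Matrix.cons_val_zero, Matrix.cons_val_one,
    Matrix.head_cons, Matrix.head_fin_const, Matrix.cons_val_two, Matrix.tail_cons,
    Matrix.of_apply, Matrix.cons_val', Matrix.empty_val', Matrix.cons_val_fin_one,
    sub_dotProduct, dotProduct_sub, Matrix.mulVec_sub]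
  linarith [hsym x₁ x₂, hsym x₂ x₃]

/-- Jensen inequality with an intermediate delay point (Lemma 2, Peng 2008). -/
theorem stmt_1 {n : ℕ} (Y : Matrix (Fin n) (Fin n) ℝ) (hYsymm : Y.IsSymm) (hY : Y.PosDef)
    (h₁ h₂ τ : ℝ) (hτ₁ : h₁ ≤ τ) (hτ₂ : τ ≤ h₂)
    (z : ℝ → Fin n → ℝ) (hz : ContDiff ℝ 1 z) (t : ℝ) :
    -(h₂ - h₁) * ∫ s in (t - h₂)..(t - h₁), deriv z s ⬝ᵥ Y *ᵥ deriv z s ≤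
      (fun p : Fin 3 × Fin n => ![z (t - h₁), z (t - τ), z (t - h₂)] p.1 p.2) ⬝ᵥ
        ((!![(-1 : ℝ), 1, 0; 1, -2, 1; 0, 1, -1] ⊗ₖ Y) *ᵥ
          fun p : Fin 3 × Fin n => ![z (t - h₁), z (t - τ), z (t - h₂)] p.1 p.2) := by
  open scoped MatrixOrder in obtain ⟨B, hB⟩ := CStarAlgebra.nonneg_iff_eq_star_mul_self.mp hY.posSemidef.nonneg
  set a := t - h₂ with ha
  set b := t - τ with hb2
  set c := t - h₁ with hc2
  have hab : a ≤ b := by simp [a, b]; linarith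
  have hbc : b ≤ c := by simp [b, c]; linarith
  have hf : Continuous (deriv z) := hz.continuous_deriv le_rfl
  have hφc : Continuous fun s => deriv z s ⬝ᵥ Y *ᵥ deriv z s := by
    simp only [dotProduct, Matrix.mulVec]
    exact continuous_finset_sum _ fun i _ =>
      ((continuous_apply i).comp hf).mul (continuous_finset_sum _ fun j _ =>
        continuous_const.mul ((continuous_apply j).comp hf))
  have hφ0 : ∀ s, 0 ≤ deriv z s ⬝ᵥ Y *ᵥ deriv z s := fun s => by
    simpa using hY.posSemidef.dotProduct_mulVec_nonneg (deriv z s)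
  have hsplit : (∫ s in a..c, deriv z s ⬝ᵥ Y *ᵥ deriv z s)
      = (∫ s in a..b, deriv z s ⬝ᵥ Y *ᵥ deriv z s)
        + ∫ s in b..c, deriv z s ⬝ᵥ Y *ᵥ deriv z s :=
    (intervalIntegral.integral_add_adjacent_intervals
      (hφc.intervalIntegrable a b) (hφc.intervalIntegrable b c)).symm
  have hJ1 : 0 ≤ ∫ s in a..b, deriv z s ⬝ᵥ Y *ᵥ deriv z s :=
    intervalIntegral.integral_nonneg hab fun s _ => hφ0 s
  have hJ2 : 0 ≤ ∫ s in b..c, deriv z s ⬝ᵥ Y *ᵥ deriv z s :=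
    intervalIntegral.integral_nonneg hbc fun s _ => hφ0 s
  have hjen1 := jensen_vec Y B hB hz hab
  have hjen2 := jensen_vec Y B hB hz hbc
  rw [rhs_eq Y hYsymm (z c) (z b) (z a)]
  rw [hsplit]
  have hca : h₂ - h₁ = c - a := by rw [ha, hc2]; ring
  rw [hca]
  nlinarith [hjen1, hjen2, hJ1, hJ2, mul_nonneg (sub_nonneg.mpr hbc) hJ1,
    mul_nonneg (sub_nonneg.mpr hab) hJ2]
end

section
/- For a continuously differentiable z : R → R^n and constants 0 ≤ h₁ ≤ h₂, by splitting the integral at an intermediate point t - τ with h₁ ≤ τ ≤ h₂ and applying the Cauchy–Schwarz (Jensen) inequality to each piece with weight matrix Y symmetric positive semidefinite: (h₂ - h₁) ∫_{t-h₂}^{t-h₁} ż(s)^T Y ż(s) ds ≥ (z(t-h₁) - z(t-τ))^T Y (z(t-h₁) - z(t-τ)) + (z(t-τ) - z(t-h₂))^T Y (z(t-τ) - z(t-h₂)). -/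
open Matrix intervalIntegral MeasureTheory

private lemma integral_apply' {n : ℕ} (g : ℝ → Fin n → ℝ) (hg : Continuous g) (a b : ℝ)
    (i : Fin n) : (∫ s in a..b, g s) i = ∫ s in a..b, g s i := by
  have := (ContinuousLinearMap.proj (R := ℝ) (φ := fun _ : Fin n => ℝ) i).intervalIntegral_comp_comm
    (μ := MeasureTheory.volume) (hg.intervalIntegrable a b)
  simpa using this.symm

private lemma integral_dot {n : ℕ} (g : ℝ → Fin n → ℝ) (hg : Continuous g) (c : Fin n → ℝ)
    (a b : ℝ) : ∫ s in a..b, g s ⬝ᵥ c = (∫ s in a..b, g s) ⬝ᵥ c := by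
  simp_rw [dotProduct]
  rw [intervalIntegral.integral_finset_sum]
  · exact Finset.sum_congr rfl fun j _ => by
      rw [intervalIntegral.integral_mul_const, integral_apply' g hg a b j]
  · intro j _
    exact (((continuous_apply j).comp hg).mul continuous_const).intervalIntegrable a b

private lemma cont_quad {n : ℕ} (Y : Matrix (Fin n) (Fin n) ℝ) (g : ℝ → Fin n → ℝ)
    (hg : Continuous g) : Continuous fun s => g s ⬝ᵥ Y *ᵥ g s := by
  simp_rw [dotProduct, mulVec, dotProduct]
  fun_prop

/-- Single-interval Jensen / Cauchy–Schwarz inequality. -/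
private lemma key {n : ℕ} (Y : Matrix (Fin n) (Fin n) ℝ) (hYsymm : Y.IsSymm)
    (hY : Y.PosSemidef) (g : ℝ → Fin n → ℝ) (hg : Continuous g) (a b : ℝ) (hab : a ≤ b) :
    (∫ s in a..b, g s) ⬝ᵥ Y *ᵥ (∫ s in a..b, g s) ≤ (b - a) * ∫ s in a..b, g s ⬝ᵥ Y *ᵥ g s := by
  set G : ℝ → Fin n → ℝ := fun x => ∫ s in a..x, g s with hGdef
  set I : ℝ → ℝ := fun x => ∫ s in a..x, g s ⬝ᵥ Y *ᵥ g s with hIdef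
  set F : ℝ → ℝ := fun x => (x - a) * I x - G x ⬝ᵥ Y *ᵥ G x with hFdef
  have hq : Continuous fun s => g s ⬝ᵥ Y *ᵥ g s := cont_quad Y g hg
  have hG : ∀ x, HasDerivAt G (g x) x := fun x => (hg.integral_hasStrictDerivAt a x).hasDerivAt
  have hI : ∀ x, HasDerivAt I (g x ⬝ᵥ Y *ᵥ g x) x := fun x =>
    (hq.integral_hasStrictDerivAt a x).hasDerivAt
  -- derivative of F
  have hF : ∀ x, HasDerivAt F
      (I x + (x - a) * (g x ⬝ᵥ Y *ᵥ g x)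
        - (g x ⬝ᵥ Y *ᵥ G x + G x ⬝ᵥ Y *ᵥ g x)) x := by
    intro x
    have hGi : ∀ i, HasDerivAt (fun y => G y i) (g x i) x := fun i => hasDerivAt_pi.mp (hG x) i
    have hquad : HasDerivAt (fun y => G y ⬝ᵥ Y *ᵥ G y)
        (g x ⬝ᵥ Y *ᵥ G x + G x ⬝ᵥ Y *ᵥ g x) x := by
      have : HasDerivAt (fun y => ∑ i, ∑ j, G y i * (Y i j * G y j))
          (∑ i, ∑ j, (g x i * (Y i j * G x j) + G x i * (Y i j * g x j))) x := by
        refine HasDerivAt.fun_sum fun i _ => ?_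
        refine HasDerivAt.fun_sum fun j _ => ?_
        exact (hGi i).mul ((hGi j).const_mul (Y i j))
      have e1 : (fun y => ∑ i, ∑ j, G y i * (Y i j * G y j))
          = fun y => G y ⬝ᵥ Y *ᵥ G y := by
        funext y; simp [dotProduct, mulVec, Finset.mul_sum]
      have e2 : (∑ i, ∑ j, (g x i * (Y i j * G x j) + G x i * (Y i j * g x j)))
          = g x ⬝ᵥ Y *ᵥ G x + G x ⬝ᵥ Y *ᵥ g x := by
        simp [dotProduct, mulVec, Finset.mul_sum, Finset.sum_add_distrib]
      rw [← e1, ← e2]; exact this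
    have hlin : HasDerivAt (fun y => (y - a) * I y)
        (1 * I x + (x - a) * (g x ⬝ᵥ Y *ᵥ g x)) x :=
      ((hasDerivAt_id x).sub_const a).mul (hI x)
    have := hlin.sub hquad
    simp only [one_mul] at this; exact this
  -- the derivative is nonnegative on [a, b]
  have hderiv_nonneg : ∀ x ∈ Set.Icc a b,
      0 ≤ I x + (x - a) * (g x ⬝ᵥ Y *ᵥ g x) - (g x ⬝ᵥ Y *ᵥ G x + G x ⬝ᵥ Y *ᵥ g x) := by
    intro x hx
    have hax : a ≤ x := hx.1
    have hrewrite : I x + (x - a) * (g x ⬝ᵥ Y *ᵥ g x)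
        - (g x ⬝ᵥ Y *ᵥ G x + G x ⬝ᵥ Y *ᵥ g x)
        = ∫ s in a..x, (g s - g x) ⬝ᵥ Y *ᵥ (g s - g x) := by
      have expand : ∀ s, (g s - g x) ⬝ᵥ Y *ᵥ (g s - g x)
          = g s ⬝ᵥ Y *ᵥ g s - (g s ⬝ᵥ (Y *ᵥ g x) + g s ⬝ᵥ (Yᵀ *ᵥ g x))
            + g x ⬝ᵥ Y *ᵥ g x := by
        intro s
        have h1 : g x ⬝ᵥ Y *ᵥ g s = g s ⬝ᵥ (Yᵀ *ᵥ g x) := by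
          rw [dotProduct_mulVec, dotProduct_comm, mulVec_transpose]
        simp only [sub_dotProduct, dotProduct_sub, mulVec_sub]
        rw [h1, dotProduct_mulVec (g s) Y (g x), ← mulVec_transpose]
        ring
      rw [intervalIntegral.integral_congr (fun s _ => expand s)]
      have hint1 : IntervalIntegrable (fun s => g s ⬝ᵥ Y *ᵥ g s) volume a x :=
        hq.intervalIntegrable a x
      have c1 : Continuous fun s => g s ⬝ᵥ (Y *ᵥ g x) := by
        simp_rw [dotProduct]; fun_prop
      have c2 : Continuous fun s => g s ⬝ᵥ (Yᵀ *ᵥ g x) := by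
        simp_rw [dotProduct]; fun_prop
      have i12 : IntervalIntegrable (fun s => g s ⬝ᵥ (Y *ᵥ g x) + g s ⬝ᵥ (Yᵀ *ᵥ g x)) volume a x :=
        (c1.add c2).intervalIntegrable a x
      have i0 : IntervalIntegrable
          (fun s => g s ⬝ᵥ Y *ᵥ g s - (g s ⬝ᵥ (Y *ᵥ g x) + g s ⬝ᵥ (Yᵀ *ᵥ g x))) volume a x :=
        hint1.sub i12
      rw [intervalIntegral.integral_add i0
          (intervalIntegrable_const), intervalIntegral.integral_sub hint1
          i12,
          intervalIntegral.integral_add (c1.intervalIntegrable a x) (c2.intervalIntegrable a x),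
          integral_dot g hg _ a x, integral_dot g hg _ a x,
          intervalIntegral.integral_const]
      have h2 : G x ⬝ᵥ (Yᵀ *ᵥ g x) = G x ⬝ᵥ Y *ᵥ g x := by rw [hYsymm.eq]
      have h3 : G x ⬝ᵥ (Y *ᵥ g x) = g x ⬝ᵥ Y *ᵥ G x := by
        rw [dotProduct_mulVec, dotProduct_comm, ← mulVec_transpose, hYsymm.eq]
      rw [h2, h3]
      simp [smul_eq_mul]
      ring
    rw [hrewrite]
    exact intervalIntegral.integral_nonneg hax fun s _ => by simpa using hY.dotProduct_mulVec_nonneg (g s - g x)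
  -- monotonicity
  have hFc : Continuous F := by
    have : Differentiable ℝ F := fun x => (hF x).differentiableAt
    exact this.continuous
  have hmono : MonotoneOn F (Set.Icc a b) := by
    refine monotoneOn_of_deriv_nonneg (convex_Icc a b) hFc.continuousOn
      (fun x hx => (hF x).differentiableAt.differentiableWithinAt) ?_
    intro x hx
    rw [interior_Icc] at hx
    rw [(hF x).deriv]
    exact hderiv_nonneg x ⟨le_of_lt hx.1, le_of_lt hx.2⟩
  have hFa : F a = 0 := by simp [hFdef, hIdef, hGdef]
  have := hmono (Set.left_mem_Icc.mpr hab) (Set.right_mem_Icc.mpr hab) hab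
  rw [hFa] at this
  have : 0 ≤ (b - a) * I b - G b ⬝ᵥ Y *ᵥ G b := this
  linarith

/-- Split-interval Jensen inequality (key step of Lemma 2, Peng 2008). -/
theorem stmt_14 (n : ℕ)
    (Y : Matrix (Fin n) (Fin n) ℝ) (hYsymm : Y.IsSymm) (hY : Y.PosSemidef)
    (h₁ h₂ τ : ℝ) (hh₁ : 0 ≤ h₁) (hτ₁ : h₁ ≤ τ) (hτ₂ : τ ≤ h₂)
    (z : ℝ → Fin n → ℝ) (hz : ContDiff ℝ 1 z) (t : ℝ) :
    (z (t - h₁) - z (t - τ)) ⬝ᵥ Y *ᵥ (z (t - h₁) - z (t - τ)) +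
      (z (t - τ) - z (t - h₂)) ⬝ᵥ Y *ᵥ (z (t - τ) - z (t - h₂)) ≤
    (h₂ - h₁) * ∫ s in (t - h₂)..(t - h₁), deriv z s ⬝ᵥ Y *ᵥ deriv z s := by
  have hdz : Continuous (deriv z) := hz.continuous_deriv le_rfl
  have hdiff : Differentiable ℝ z := hz.differentiable one_ne_zero
  have ftc : ∀ a b : ℝ, z b - z a = ∫ s in a..b, deriv z s := fun a b =>
    (intervalIntegral.integral_deriv_eq_sub (fun x _ => hdiff x)
      (hdz.intervalIntegrable a b)).symm
  have hq : Continuous fun s => deriv z s ⬝ᵥ Y *ᵥ deriv z s := cont_quad Y (deriv z) hdz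
  set A : ℝ := ∫ s in (t - h₂)..(t - τ), deriv z s ⬝ᵥ Y *ᵥ deriv z s with hA
  set B : ℝ := ∫ s in (t - τ)..(t - h₁), deriv z s ⬝ᵥ Y *ᵥ deriv z s with hB
  have hA0 : 0 ≤ A := intervalIntegral.integral_nonneg (by linarith) fun s _ => by simpa using hY.dotProduct_mulVec_nonneg (deriv z s)
  have hB0 : 0 ≤ B := intervalIntegral.integral_nonneg (by linarith) fun s _ => by simpa using hY.dotProduct_mulVec_nonneg (deriv z s)
  have hsplit : (∫ s in (t - h₂)..(t - h₁), deriv z s ⬝ᵥ Y *ᵥ deriv z s) = A + B :=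
    (intervalIntegral.integral_add_adjacent_intervals (hq.intervalIntegrable _ _)
      (hq.intervalIntegrable _ _)).symm
  have k1 : (z (t - h₁) - z (t - τ)) ⬝ᵥ Y *ᵥ (z (t - h₁) - z (t - τ)) ≤ (τ - h₁) * B := by
    rw [ftc (t - τ) (t - h₁)]
    have := key Y hYsymm hY (deriv z) hdz (t - τ) (t - h₁) (by linarith)
    have harith : (t - h₁) - (t - τ) = τ - h₁ := by ring
    rw [harith] at this
    exact this
  have k2 : (z (t - τ) - z (t - h₂)) ⬝ᵥ Y *ᵥ (z (t - τ) - z (t - h₂)) ≤ (h₂ - τ) * A := by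
    rw [ftc (t - h₂) (t - τ)]
    have := key Y hYsymm hY (deriv z) hdz (t - h₂) (t - τ) (by linarith)
    have harith : (t - τ) - (t - h₂) = h₂ - τ := by ring
    rw [harith] at this
    exact this
  rw [hsplit]
  nlinarith [k1, k2, hA0, hB0]
end
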